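/- Let W₁ be an m₁×n real matrix and W₂ an m₂×n real matrix. Suppose there exists a real matrix W₂′ with n columns such that W₂′ᵀW₂′ = W₂ᵀW₂ and W₂′ is obtained by stacking the rows of W₁ together with the rows of some additional real matrix W₃ with n columns. Then ∑ᵢ₌₁ⁿ √λᵢ(W₁ᵀW₁) ≤ ∑ᵢ₌₁ⁿ √λᵢ(W₂ᵀW₂), where λᵢ(M) denote the eigenvalues (with multiplicity) of the positive semidefinite matrix M; consequently the singular value bound satisfies SVDB(W₁) ≤ SVDB(W₂). -/

import Mathlib

open Matrix BigOperators

/-- Removed from Mathlib; restored with its old statement. -/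
theorem Matrix.isHermitian_transpose_mul_self {m n α : Type*} [Fintype m] [CommSemiring α]
    [StarRing α] [TrivialStar α] (A : Matrix m n α) : (Aᵀ * A).IsHermitian := by
  rw [Matrix.IsHermitian, Matrix.conjTranspose_eq_transpose_of_trivial, Matrix.transpose_mul,
    Matrix.transpose_transpose]
noncomputable def Matrix.PosSemidef.sqrt {n : ℕ} {A : Matrix (Fin n) (Fin n) ℝ} (hA : A.PosSemidef) :
    Matrix (Fin n) (Fin n) ℝ :=
  (hA.1.eigenvectorUnitary : Matrix (Fin n) (Fin n) ℝ) *
    diagonal (fun i => Real.sqrt (hA.1.eigenvalues i)) *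
    (star hA.1.eigenvectorUnitary : Matrix (Fin n) (Fin n) ℝ)

lemma Matrix.PosSemidef.posSemidef_sqrt {n : ℕ} {A : Matrix (Fin n) (Fin n) ℝ}
    (hA : A.PosSemidef) : hA.sqrt.PosSemidef := by
  unfold Matrix.PosSemidef.sqrt
  have hD : (diagonal (fun i => Real.sqrt (hA.1.eigenvalues i))).PosSemidef :=
    Matrix.posSemidef_diagonal_iff.mpr fun i => Real.sqrt_nonneg _
  simpa [Matrix.star_eq_conjTranspose] using hD.mul_mul_conjTranspose_same
    (hA.1.eigenvectorUnitary : Matrix (Fin n) (Fin n) ℝ)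

lemma Matrix.PosSemidef.sqrt_mul_self {n : ℕ} {A : Matrix (Fin n) (Fin n) ℝ}
    (hA : A.PosSemidef) : hA.sqrt * hA.sqrt = A := by
  unfold Matrix.PosSemidef.sqrt
  conv_rhs => rw [hA.1.spectral_theorem, Unitary.conjStarAlgAut_apply]
  have hU := Unitary.coe_star_mul_self hA.1.eigenvectorUnitary
  calc _ = (hA.1.eigenvectorUnitary : Matrix (Fin n) (Fin n) ℝ) *
        (diagonal (fun i => Real.sqrt (hA.1.eigenvalues i)) *
          ((star hA.1.eigenvectorUnitary : Matrix (Fin n) (Fin n) ℝ) *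
            (hA.1.eigenvectorUnitary : Matrix (Fin n) (Fin n) ℝ)) *
          diagonal (fun i => Real.sqrt (hA.1.eigenvalues i))) *
        (star hA.1.eigenvectorUnitary : Matrix (Fin n) (Fin n) ℝ) := by
          simp only [Matrix.mul_assoc]
    _ = _ := by
      rw [hU, Matrix.mul_one, diagonal_mul_diagonal]
      congr 2
      ext i j
      simp [diagonal_apply, Real.mul_self_sqrt (hA.eigenvalues_nonneg i)]

-- Step 1: sum of sqrt of eigenvalues equals trace of the psd sqrt
lemma sum_sqrt_eq_trace {n : ℕ} {A : Matrix (Fin n) (Fin n) ℝ} (hA : A.PosSemidef) :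
    ∑ i, Real.sqrt (hA.1.eigenvalues i) = (hA.sqrt).trace := by
  rw [Matrix.PosSemidef.sqrt, Matrix.trace_mul_cycle]
  rw [show (star (hA.1.eigenvectorUnitary : Matrix (Fin n) (Fin n) ℝ)) *
      (hA.1.eigenvectorUnitary : Matrix (Fin n) (Fin n) ℝ) = 1 from
    Unitary.coe_star_mul_self _, one_mul]
  simp [Matrix.trace_diagonal]

-- Step 2: trace equals sum of quadratic forms over eigenbasis columns of unitary U
lemma trace_eq_sum_quad {n : ℕ} (S U : Matrix (Fin n) (Fin n) ℝ)
    (hU : Uᵀ * U = 1) :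
    S.trace = ∑ i, (fun j => U j i) ⬝ᵥ (S *ᵥ fun j => U j i) := by
  have h : S.trace = (Uᵀ * S * U).trace := by
    rw [Matrix.trace_mul_cycle, mul_eq_one_comm.mp hU, one_mul]
  rw [h, Matrix.trace]
  refine Finset.sum_congr rfl fun i _ => ?_
  simp only [Matrix.diag_apply, Matrix.mul_apply, Matrix.transpose_apply, dotProduct,
    Matrix.mulVec, dotProduct, Finset.sum_mul, Finset.mul_sum]
  rw [Finset.sum_comm]
  exact Finset.sum_congr rfl fun j _ => Finset.sum_congr rfl fun k _ => by ring

-- Step 3: Cauchy-Schwarz bound for quadratic form of a psd matrix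
lemma quad_le_sqrt {n : ℕ} {S : Matrix (Fin n) (Fin n) ℝ} (hS : S.PosSemidef)
    (v : Fin n → ℝ) (hv : v ⬝ᵥ v = 1) :
    v ⬝ᵥ (S *ᵥ v) ≤ Real.sqrt (v ⬝ᵥ ((S * S) *ᵥ v)) := by
  have hd : 0 ≤ v ⬝ᵥ (S *ᵥ v) := by
    have := hS.dotProduct_mulVec_nonneg v
    simpa using this
  have hcs : (v ⬝ᵥ (S *ᵥ v)) ^ 2 ≤ (v ⬝ᵥ v) * ((S *ᵥ v) ⬝ᵥ (S *ᵥ v)) := by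
    have := Finset.sum_mul_sq_le_sq_mul_sq Finset.univ v (S *ᵥ v)
    simpa [dotProduct, sq] using this
  have hsymm : Sᵀ = S := by
    have := hS.1
    simpa [Matrix.IsHermitian, Matrix.conjTranspose_eq_transpose_of_trivial] using this
  have hSv : (S *ᵥ v) ⬝ᵥ (S *ᵥ v) = v ⬝ᵥ ((S * S) *ᵥ v) := by
    rw [← Matrix.mulVec_mulVec, Matrix.dotProduct_mulVec, ← Matrix.mulVec_transpose, hsymm,
      dotProduct_comm]
  calc v ⬝ᵥ (S *ᵥ v) ≤ Real.sqrt ((v ⬝ᵥ (S *ᵥ v)) ^ 2) := by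
        rw [Real.sqrt_sq hd]
    _ ≤ Real.sqrt (v ⬝ᵥ ((S * S) *ᵥ v)) := by
        apply Real.sqrt_le_sqrt
        rw [← hSv]
        calc (v ⬝ᵥ (S *ᵥ v)) ^ 2 ≤ (v ⬝ᵥ v) * ((S *ᵥ v) ⬝ᵥ (S *ᵥ v)) := hcs
        _ = (S *ᵥ v) ⬝ᵥ (S *ᵥ v) := by rw [hv, one_mul]

lemma sum_sqrt_eig_mono {n : ℕ} {A B : Matrix (Fin n) (Fin n) ℝ}
    (hA : A.PosSemidef) (hB : B.PosSemidef) (hsub : (B - A).PosSemidef) :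
    ∑ i, Real.sqrt (hA.1.eigenvalues i) ≤ ∑ i, Real.sqrt (hB.1.eigenvalues i) := by
  set S := hA.sqrt with hSdef
  have hS := hA.posSemidef_sqrt
  have hSS : S * S = A := hA.sqrt_mul_self
  set U : Matrix (Fin n) (Fin n) ℝ := (hB.1.eigenvectorUnitary : Matrix (Fin n) (Fin n) ℝ)
    with hUdef
  have hU : Uᵀ * U = 1 := by
    have := Unitary.coe_star_mul_self hB.1.eigenvectorUnitary
    simpa [Matrix.star_eq_conjTranspose, Matrix.conjTranspose_eq_transpose_of_trivial] using this
  set v : Fin n → Fin n → ℝ := fun i j => U j i with hvdef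
  have hvv : ∀ i, v i ⬝ᵥ v i = 1 := by
    intro i
    have := congrFun (congrFun hU i) i
    simpa [Matrix.mul_apply, dotProduct, Matrix.one_apply, Matrix.transpose_apply] using this
  have hveq : ∀ i, v i = ⇑(hB.1.eigenvectorBasis i) := fun i => funext fun j => rfl
  have hBv : ∀ i, v i ⬝ᵥ (B *ᵥ v i) = hB.1.eigenvalues i := by
    intro i
    have h1 : B *ᵥ v i = hB.1.eigenvalues i • v i := by
      rw [hveq i]; exact hB.1.mulVec_eigenvectorBasis i
    rw [h1, dotProduct_smul, smul_eq_mul, hvv i, mul_one]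
  have hAB : ∀ i, v i ⬝ᵥ (A *ᵥ v i) ≤ v i ⬝ᵥ (B *ᵥ v i) := by
    intro i
    have := hsub.dotProduct_mulVec_nonneg (v i)
    simp only [Matrix.sub_mulVec, dotProduct_sub, RCLike.re_to_real, star_trivial] at this
    linarith [this]
  calc ∑ i, Real.sqrt (hA.1.eigenvalues i) = S.trace := sum_sqrt_eq_trace hA
    _ = ∑ i, v i ⬝ᵥ (S *ᵥ v i) := trace_eq_sum_quad S U hU
    _ ≤ ∑ i, Real.sqrt (v i ⬝ᵥ ((S * S) *ᵥ v i)) :=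
        Finset.sum_le_sum fun i _ => quad_le_sqrt hS (v i) (hvv i)
    _ = ∑ i, Real.sqrt (v i ⬝ᵥ (A *ᵥ v i)) := by rw [hSS]
    _ ≤ ∑ i, Real.sqrt (v i ⬝ᵥ (B *ᵥ v i)) :=
        Finset.sum_le_sum fun i _ => Real.sqrt_le_sqrt (hAB i)
    _ = ∑ i, Real.sqrt (hB.1.eigenvalues i) := by
        exact Finset.sum_congr rfl fun i _ => by rw [hBv i]

/-- **Monotonicity of the singular value bound under workload containment.**
If some workload `W₂′` equivalent to `W₂` (i.e. `W₂′ᵀW₂′ = W₂ᵀW₂`) is obtained by stacking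
the rows of `W₁` with the rows of an additional matrix `W₃`, then the sum of singular values
of `W₁` is at most that of `W₂`, and consequently `SVDB(W₁) ≤ SVDB(W₂)` where
`SVDB(W) = (1/n)(∑ᵢ √λᵢ(WᵀW))²`. -/
theorem svdb_monotone (m₁ m₂ n : ℕ)
    (W₁ : Matrix (Fin m₁) (Fin n) ℝ) (W₂ : Matrix (Fin m₂) (Fin n) ℝ)
    (hcont : ∃ (m₃ : ℕ) (W₃ : Matrix (Fin m₃) (Fin n) ℝ),
      (Matrix.fromRows W₁ W₃)ᵀ * Matrix.fromRows W₁ W₃ = W₂ᵀ * W₂) :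
    (∑ i, Real.sqrt ((Matrix.isHermitian_transpose_mul_self W₁).eigenvalues i))
        ≤ ∑ i, Real.sqrt ((Matrix.isHermitian_transpose_mul_self W₂).eigenvalues i) ∧
    (1 / n : ℝ) * (∑ i, Real.sqrt ((Matrix.isHermitian_transpose_mul_self W₁).eigenvalues i)) ^ 2
        ≤ (1 / n : ℝ) *
          (∑ i, Real.sqrt ((Matrix.isHermitian_transpose_mul_self W₂).eigenvalues i)) ^ 2 := by
  obtain ⟨m₃, W₃, h⟩ := hcont
  have hct : ∀ (m : ℕ) (W : Matrix (Fin m) (Fin n) ℝ), Wᴴ = Wᵀ := fun m W => rfl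
  have hA : (W₁ᵀ * W₁).PosSemidef := by
    have := Matrix.posSemidef_conjTranspose_mul_self W₁; rwa [hct] at this
  have hB : (W₂ᵀ * W₂).PosSemidef := by
    have := Matrix.posSemidef_conjTranspose_mul_self W₂; rwa [hct] at this
  have hsum : W₁ᵀ * W₁ + W₃ᵀ * W₃ = W₂ᵀ * W₂ := by
    rw [← h, Matrix.transpose_fromRows, Matrix.fromCols_mul_fromRows]
  have hsub : (W₂ᵀ * W₂ - W₁ᵀ * W₁).PosSemidef := by
    have h3 : (W₃ᵀ * W₃).PosSemidef := by
      have := Matrix.posSemidef_conjTranspose_mul_self W₃; rwa [hct] at this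
    rwa [← hsum, add_sub_cancel_left]
  have key := sum_sqrt_eig_mono hA hB hsub
  refine ⟨key, ?_⟩
  have h1 : 0 ≤ ∑ i, Real.sqrt ((Matrix.isHermitian_transpose_mul_self W₁).eigenvalues i) :=
    Finset.sum_nonneg fun i _ => Real.sqrt_nonneg _
  have h2 : (0:ℝ) ≤ 1 / n := by positivity
  exact mul_le_mul_of_nonneg_left (pow_le_pow_left₀ h1 key 2) h2
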